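/- Closed-form optimum at an access point: let N ≥ 1 and τ ≥ 1 be integers and let λ, c be positive reals with ⌊c/λ⌋ ≥ 1. Then the maximum integer s with s ≤ N such that there exists k : Fin s → ℕ with 1 ≤ k i, k i ≤ τ, and λ · k i ≤ c for all i, and k pinwheel-schedulable, equals min {N, τ, ⌊c/λ⌋}; the maximum is attained by the constant vector k i = min {τ, ⌊c/λ⌋} scheduled round-robin. -/
import Mathlib

lemma exists_mod_window (m : ℕ) (hm : 0 < m) (i t : ℕ) (hi : i < m) :
    ∃ u, t ≤ u ∧ u < t + m ∧ u % m = i := by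
  refine ⟨t + (m + i - t % m) % m, Nat.le_add_right _ _, ?_, ?_⟩
  · have := Nat.mod_lt (m + i - t % m) hm; omega
  · have hr : t % m < m := Nat.mod_lt _ hm
    have h1 : (t + (m + i - t % m) % m) % m = (t + (m + i - t % m)) % m :=
      Nat.add_mod_mod t _ m
    have h3 := Nat.mod_add_div t m
    have h4 : m * (t / m + 1) = m * (t / m) + m := by ring
    have h2 : t + (m + i - t % m) = m * (t / m + 1) + i := by omega
    rw [h1, h2, Nat.mul_add_mod, Nat.mod_eq_of_lt hi]

/-- Closed-form optimum at an access point: let `N ≥ 1` and `τ ≥ 1` be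
integers and `λ, c` positive reals with `⌊c/λ⌋ ≥ 1`.  The maximum integer `s ≤ N` such
that there exists `k : Fin s → ℕ` with `1 ≤ k i ≤ τ` and `λ · k i ≤ c` for all `i` and
`k` pinwheel-schedulable equals `min {N, τ, ⌊c/λ⌋}`; the maximum is attained by the
constant vector `k i = min {τ, ⌊c/λ⌋}` scheduled round-robin. -/
theorem access_point_optimum (N τ : ℕ) (hN : 1 ≤ N) (hτ : 1 ≤ τ)
    (lam c : ℝ) (hlam : 0 < lam) (hc : 0 < c) (hfl : 1 ≤ ⌊c / lam⌋) :
    IsGreatest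
      {s : ℕ | s ≤ N ∧
        ∃ k : Fin s → ℕ,
          (∀ i, 1 ≤ k i) ∧ (∀ i, k i ≤ τ) ∧ (∀ i, lam * (k i : ℝ) ≤ c) ∧
          ∃ σ : ℕ → Option (Fin s),
            ∀ (i : Fin s) (t : ℕ), ∃ u, t ≤ u ∧ u < t + k i ∧ σ u = some i}
      (min N (min τ (⌊c / lam⌋).toNat)) ∧
    (∀ (i : Fin (min N (min τ (⌊c / lam⌋).toNat))) (t : ℕ),
      ∃ u, t ≤ u ∧ u < t + min τ (⌊c / lam⌋).toNat ∧
        (some (⟨u % min N (min τ (⌊c / lam⌋).toNat), Nat.mod_lt u (by omega)⟩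
          : Fin (min N (min τ (⌊c / lam⌋).toNat)))
          : Option (Fin (min N (min τ (⌊c / lam⌋).toNat)))) = some i) := by
  set fl : ℕ := (⌊c / lam⌋).toNat with hfldef
  have hfl1 : 1 ≤ fl := by omega
  set m : ℕ := min N (min τ fl) with hmdef
  have hm : 0 < m := by omega
  have hmfl : m ≤ fl := by omega
  have hmτ : m ≤ τ := by omega
  have hflle : (fl : ℝ) ≤ c / lam := by
    have h0 : (0:ℤ) ≤ ⌊c / lam⌋ := by omega
    have : ((fl : ℤ) : ℝ) ≤ c / lam := by
      rw [hfldef, Int.toNat_of_nonneg h0]; exact Int.floor_le _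
    exact_mod_cast this
  have hround : ∀ (i : Fin m) (t : ℕ),
      ∃ u, t ≤ u ∧ u < t + min τ fl ∧
        (⟨u % m, Nat.mod_lt u hm⟩ : Fin m) = i := by
    intro i t
    obtain ⟨u, hu1, hu2, hu3⟩ := exists_mod_window m hm i.val t i.isLt
    exact ⟨u, hu1, by omega, Fin.ext hu3⟩
  constructor
  · constructor
    · refine ⟨min_le_left _ _, fun _ => min τ fl, fun _ => le_min hτ hfl1, fun _ => min_le_left _ _,
        fun _ => ?_, fun u => some ⟨u % m, Nat.mod_lt u hm⟩, fun i t => ?_⟩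
      · have h1 : ((min τ fl : ℕ) : ℝ) ≤ (fl : ℝ) := by exact_mod_cast min_le_right τ fl
        rw [mul_comm, ← le_div_iff₀ hlam]
        exact h1.trans hflle
      · obtain ⟨u, h1, h2, h3⟩ := hround i t
        exact ⟨u, h1, h2, congrArg some h3⟩
    · rintro s ⟨hsN, k, hk1, hkτ, hkc, σ, hσ⟩
      have hkfl : ∀ i, k i ≤ fl := by
        intro i
        have h1 : (k i : ℝ) ≤ c / lam := by
          rw [le_div_iff₀ hlam, mul_comm]; exact hkc i
        have h2 : (k i : ℤ) ≤ ⌊c / lam⌋ := Int.le_floor.mpr (by exact_mod_cast h1)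
        omega
      have hcard : ∀ K : ℕ, (∀ i, k i ≤ K) → s ≤ K := by
        intro K hK
        have hf : ∀ i : Fin s, ∃ u : ℕ, u < K ∧ σ u = some i := by
          intro i
          obtain ⟨u, _, hu2, hu3⟩ := hσ i 0
          exact ⟨u, by have := hK i; omega, hu3⟩
        choose f hf1 hf2 using hf
        have hinj : Function.Injective (fun i : Fin s => (⟨f i, hf1 i⟩ : Fin K)) := by
          intro a b hab
          have : f a = f b := by simpa using congrArg Fin.val hab
          have := (hf2 a).symm.trans (this ▸ hf2 b)
          exact Option.some_injective _ this
        simpa using Fintype.card_le_of_injective _ hinj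
      have := hcard τ hkτ
      have := hcard fl hkfl
      omega
  · intro i t
    obtain ⟨u, h1, h2, h3⟩ := hround i t
    exact ⟨u, h1, h2, congrArg some h3⟩
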